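/- Let f : ℝ × (0, ∞) → ℝ be continuous and satisfy: (a) for every 0 < a < b there is L > 0 with |f(x, r₁) − f(x, r₂)| ≤ L|r₁ − r₂| for all x ∈ ℝ and r₁, r₂ ∈ [a, b]; (b) there exist δ > 0 and c > 0 with f(x, r) ≥ c/(2r) for all x ∈ ℝ and 0 < r < δ; (c) there exists R₀ > δ with f(x, r) ≤ −1/2 for all x ∈ ℝ and r ≥ R₀; (d) there exists K > 0 with |f(x, r)| ≤ K for all x ∈ ℝ and r ≥ δ. For t ∈ ℝ let 𝓖⁻(t) denote the set of differentiable r : (−∞, t] → (0, ∞) with r′(x) = f(x, r(x)) for all x ≤ t and r(x) → +∞ as x → −∞. Then there exist constants 0 < m ≤ M and a differentiable R⁻ : ℝ → ℝ with m ≤ R⁻(x) ≤ M and R⁻′(x) = f(x, R⁻(x)) for all x ∈ ℝ, such that for every t ∈ ℝ, R⁻(t) = inf { r(t) : r ∈ 𝓖⁻(t) }. -/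

import Mathlib

open Filter

/-- The family `𝓖⁻(t)` of positive solutions of `r' = f(x, r)` on `(-∞, t]`
tending to `+∞` as `x → -∞` (incoming characteristics from spatial infinity). -/
def incomingSolutions (f : ℝ → ℝ → ℝ) (t : ℝ) : Set (ℝ → ℝ) :=
  {r | (∀ x ∈ Set.Iic t, 0 < r x) ∧
       (∀ x ∈ Set.Iic t, HasDerivWithinAt r (f x (r x)) (Set.Iic t) x) ∧
       Tendsto r atBot atTop}


namespace WhiteHole
open Set


/-- Forward lower barrier: if `ρ` starts above `B` and has nonnegative derivative
whenever it is below `B`, it stays above `B`. -/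
lemma barrier_ge {ρ g : ℝ → ℝ} {s t B : ℝ}
    (hcont : ContinuousOn ρ (Set.Icc s t))
    (hderiv : ∀ x ∈ Set.Ioo s t, HasDerivAt ρ (g x) x)
    (hpos : ∀ x ∈ Set.Ioo s t, ρ x < B → 0 ≤ g x)
    (hs : B ≤ ρ s) : ∀ x ∈ Set.Icc s t, B ≤ ρ x := by
  by_contra hcon
  push_neg at hcon
  obtain ⟨x₁, hx₁, hx₁B⟩ := hcon
  set A : Set ℝ := Set.Icc s x₁ ∩ ρ ⁻¹' (Set.Ici B) with hA
  have hst : s ≤ t := hx₁.1.trans hx₁.2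
  have hsx₁ : s ≤ x₁ := hx₁.1
  have hAclosed : IsClosed A :=
    (hcont.mono (Set.Icc_subset_Icc_right hx₁.2)).preimage_isClosed_of_isClosed
      isClosed_Icc isClosed_Ici
  have hsA : s ∈ A := ⟨⟨le_refl _, hsx₁⟩, hs⟩
  have hbddA : BddAbove A := BddAbove.mono Set.inter_subset_left bddAbove_Icc
  set w := sSup A with hw
  have hwA : w ∈ A := hAclosed.csSup_mem ⟨s, hsA⟩ hbddA
  have hwB : B ≤ ρ w := hwA.2
  have hwx₁ : w < x₁ := by
    rcases lt_or_eq_of_le hwA.1.2 with h | h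
    · exact h
    · exact absurd hwB (by rw [h]; exact not_le.2 hx₁B)
  have hws : s ≤ w := hwA.1.1
  have hlt : ∀ x ∈ Set.Ioc w x₁, ρ x < B := by
    intro x hx
    by_contra h
    push_neg at h
    exact absurd (le_csSup hbddA ⟨⟨hws.trans hx.1.le, hx.2⟩, h⟩) (not_le.2 hx.1)
  have key : ∀ w' ∈ Set.Ioo w x₁, ρ w' ≤ ρ x₁ := by
    intro w' hw'
    have hsub : Set.Ioo w' x₁ ⊆ Set.Ioo s t :=
      Set.Ioo_subset_Ioo (hws.trans hw'.1.le) hx₁.2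
    have hmono : MonotoneOn ρ (Set.Icc w' x₁) := by
      apply monotoneOn_of_deriv_nonneg (convex_Icc _ _)
      · exact hcont.mono (Set.Icc_subset_Icc (hws.trans hw'.1.le) hx₁.2)
      · intro x hx
        rw [interior_Icc] at hx
        exact ((hderiv x (hsub hx)).differentiableAt).differentiableWithinAt
      · intro x hx
        rw [interior_Icc] at hx
        rw [(hderiv x (hsub hx)).deriv]
        exact hpos x (hsub hx) (hlt x ⟨hw'.1.trans hx.1, hx.2.le⟩)
    exact hmono ⟨le_refl _, hw'.2.le⟩ ⟨hw'.2.le, le_refl _⟩ hw'.2.le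
  have hcw : ContinuousWithinAt ρ (Set.Ioo w x₁) w := by
    apply (hcont w ⟨hws, hwx₁.le.trans hx₁.2⟩).mono
    intro x hx
    exact ⟨hws.trans hx.1.le, hx.2.le.trans hx₁.2⟩
  have hne2 : (nhdsWithin w (Set.Ioo w x₁)).NeBot := by
    rw [nhdsWithin_Ioo_eq_nhdsGT hwx₁]
    infer_instance
  have hlim : ρ w ≤ ρ x₁ := by
    refine le_of_tendsto hcw ?_
    filter_upwards [self_mem_nhdsWithin] with x hx
    exact key x hx
  exact absurd (hwB.trans hlim) (not_le.2 hx₁B)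

/-- Forward upper barrier. -/
lemma barrier_le {ρ g : ℝ → ℝ} {s t B : ℝ}
    (hcont : ContinuousOn ρ (Set.Icc s t))
    (hderiv : ∀ x ∈ Set.Ioo s t, HasDerivAt ρ (g x) x)
    (hneg : ∀ x ∈ Set.Ioo s t, B < ρ x → g x ≤ 0)
    (hs : ρ s ≤ B) : ∀ x ∈ Set.Icc s t, ρ x ≤ B := by
  have h := barrier_ge (ρ := fun x => -ρ x) (g := fun x => -g x) (s := s) (t := t) (B := -B)
    (hcont.neg) (fun x hx => (hderiv x hx).neg)
    (fun x hx hlt => neg_nonneg.2 (hneg x hx (by simp only [neg_lt_neg_iff] at hlt; exact hlt)))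
    (by simpa using hs)
  intro x hx
  have := h x hx
  simpa using this

/-- Backward lower barrier: if `ρ` ends above `B` at time `t` and has nonpositive
derivative whenever it is below `B`, then it is above `B` on all of `[s, t]`. -/
lemma barrier_ge_backward {ρ g : ℝ → ℝ} {s t B : ℝ}
    (hcont : ContinuousOn ρ (Set.Icc s t))
    (hderiv : ∀ x ∈ Set.Ioo s t, HasDerivAt ρ (g x) x)
    (hneg : ∀ x ∈ Set.Ioo s t, ρ x < B → g x ≤ 0)
    (ht : B ≤ ρ t) : ∀ x ∈ Set.Icc s t, B ≤ ρ x := by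
  have hmaps : ∀ x ∈ Set.Icc s t, s + t - x ∈ Set.Icc s t := by
    intro x hx; constructor <;> [linarith [hx.2]; linarith [hx.1]]
  have hmaps' : ∀ x ∈ Set.Ioo s t, s + t - x ∈ Set.Ioo s t := by
    intro x hx; constructor <;> [linarith [hx.2]; linarith [hx.1]]
  have h := barrier_ge (ρ := fun x => ρ (s + t - x)) (g := fun x => -g (s + t - x))
    (s := s) (t := t) (B := B)
    (hcont.comp ((continuous_const.sub continuous_id).continuousOn) hmaps)
    (fun x hx => by
      have h1 : HasDerivAt (fun y : ℝ => s + t - y) (-1) x := by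
        simpa using (hasDerivAt_id x).const_sub (s + t)
      have h2 := (hderiv (s + t - x) (hmaps' x hx)).comp x h1
      simpa [mul_comm, Function.comp_def] using h2)
    (fun x hx hlt => neg_nonneg.2 (hneg (s + t - x) (hmaps' x hx) hlt))
    (by simpa using ht)
  intro x hx
  have := h (s + t - x) (hmaps x hx)
  simpa using this



lemma clamp_lip (a b x y : ℝ) : |max a (min b x) - max a (min b y)| ≤ |x - y| := by
  have h1 : |max a (min b x) - max a (min b y)| ≤ |min b x - min b y| := by
    rw [max_comm a (min b x), max_comm a (min b y)]
    exact abs_max_sub_max_le_abs _ _ _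
  have h2 : |min b x - min b y| ≤ max |b - b| |x - y| := abs_min_sub_min_le_max b x b y
  simp only [sub_self, abs_zero] at h2
  have h3 : max 0 |x - y| = |x - y| := max_eq_right (abs_nonneg _)
  rw [h3] at h2
  exact h1.trans h2

/-- Local solution via Picard–Lindelöf for a globally Lipschitz, bounded field. -/
lemma exists_local_sol {F : ℝ → ℝ → ℝ} {L : ℝ} (hL : 0 ≤ L)
    (hlipF : ∀ x y₁ y₂ : ℝ, |F x y₁ - F x y₂| ≤ L * |y₁ - y₂|)
    (hcontF : ∀ y : ℝ, Continuous fun x => F x y)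
    {tMin t₀ tMax : ℝ} {C : ℝ} (hC : ∀ x ∈ Set.Icc tMin tMax, ∀ y : ℝ, |F x y| ≤ C)
    (ht₀ : t₀ ∈ Set.Icc tMin tMax) (y₀ : ℝ) :
    ∃ ρ : ℝ → ℝ, ρ t₀ = y₀ ∧ ∀ x ∈ Set.Icc tMin tMax,
      HasDerivWithinAt ρ (F x (ρ x)) (Set.Icc tMin tMax) x := by
  have hC0 : 0 ≤ C := (abs_nonneg _).trans (hC t₀ ht₀ y₀)
  have hmax : 0 ≤ max (tMax - t₀) (t₀ - tMin) := le_max_iff.2 (Or.inl (by linarith [ht₀.2]))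
  have hpl : IsPicardLindelof F (tmin := tMin) (tmax := tMax) ⟨t₀, ht₀⟩ y₀
      (C * max (tMax - t₀) (t₀ - tMin)).toNNReal 0 C.toNNReal L.toNNReal := by
    constructor
    · intro t _
      apply LipschitzWith.lipschitzOnWith
      apply LipschitzWith.of_dist_le_mul
      intro y₁ y₂
      rw [Real.dist_eq, Real.dist_eq, Real.coe_toNNReal L hL]
      exact hlipF t y₁ y₂
    · intro y _
      exact (hcontF y).continuousOn
    · intro t ht y _
      rw [Real.norm_eq_abs, Real.coe_toNNReal C hC0]
      exact hC t ht y
    · simp only [NNReal.coe_zero, sub_zero, Real.coe_toNNReal C hC0,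
        Real.coe_toNNReal _ (mul_nonneg hC0 hmax)]
      exact le_refl _
  exact hpl.exists_eq_forall_mem_Icc_hasDerivWithinAt₀

lemma cont_time {f : ℝ → ℝ → ℝ}
    (hf : ContinuousOn (fun p : ℝ × ℝ => f p.1 p.2) (Set.univ ×ˢ Set.Ioi 0))
    {y : ℝ} (hy : 0 < y) : Continuous fun x => f x y := by
  rw [← continuousOn_univ]
  have heq : (fun x => f x y) = (fun p : ℝ × ℝ => f p.1 p.2) ∘ (fun x => (x, y)) := rfl
  rw [heq]
  apply hf.comp (Continuous.continuousOn (by continuity))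
  intro x _
  exact ⟨trivial, hy⟩

/-- Global forward existence of a solution trapped in `[δ, max y₀ R₀]`. -/
lemma forward_exists {f : ℝ → ℝ → ℝ} {δ c R₀ : ℝ}
    (hf : ContinuousOn (fun p : ℝ × ℝ => f p.1 p.2) (Set.univ ×ˢ Set.Ioi 0))
    (hlip : ∀ a b : ℝ, 0 < a → a < b → ∃ L > 0, ∀ x : ℝ,
      ∀ r₁ ∈ Set.Icc a b, ∀ r₂ ∈ Set.Icc a b, |f x r₁ - f x r₂| ≤ L * |r₁ - r₂|)
    (hδ : 0 < δ) (hc : 0 < c)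
    (hsmall : ∀ x r : ℝ, 0 < r → r < δ → c / (2 * r) ≤ f x r)
    (hR₀ : δ < R₀)
    (hlarge : ∀ x r : ℝ, R₀ ≤ r → f x r ≤ -(1:ℝ)/2)
    (s y₀ : ℝ) (hy : δ ≤ y₀) :
    ∃ ρ : ℝ → ℝ, ρ s = y₀ ∧ (∀ x ∈ Set.Ici s, δ ≤ ρ x ∧ ρ x ≤ max y₀ R₀) ∧
      (∀ x ∈ Set.Ioi s, HasDerivAt ρ (f x (ρ x)) x) ∧
      HasDerivWithinAt ρ (f s y₀) (Set.Ici s) s ∧ ContinuousOn ρ (Set.Ici s) := by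
  set B := max y₀ R₀ with hB
  set b := B + 1 with hb
  have hδB : δ ≤ B := hy.trans (le_max_left _ _)
  have hR₀B : R₀ ≤ B := le_max_right _ _
  have hδ2b : δ / 2 < b := by linarith
  set cl : ℝ → ℝ := fun y => max (δ/2) (min b y) with hcl
  set F : ℝ → ℝ → ℝ := fun x y => f x (cl y) with hF
  have hcl_pos : ∀ y, 0 < cl y := fun y => lt_of_lt_of_le (by linarith) (le_max_left _ _)
  have hcl_mem : ∀ y, cl y ∈ Set.Icc (δ/2) b := by
    intro y
    refine ⟨le_max_left _ _, max_le hδ2b.le (min_le_left _ _)⟩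
  have hcl_fix : ∀ y, δ ≤ y → y ≤ B → cl y = y := by
    intro y h1 h2
    have : min b y = y := min_eq_right (by linarith)
    rw [hcl]; simp only [this]
    exact max_eq_right (by linarith)
  obtain ⟨L, hL, hLf⟩ := hlip (δ/2) b (by linarith) (by linarith)
  have hlipF : ∀ x y₁ y₂ : ℝ, |F x y₁ - F x y₂| ≤ L * |y₁ - y₂| := by
    intro x y₁ y₂
    calc |F x y₁ - F x y₂| ≤ L * |cl y₁ - cl y₂| :=
          hLf x (cl y₁) (hcl_mem y₁) (cl y₂) (hcl_mem y₂)
    _ ≤ L * |y₁ - y₂| := mul_le_mul_of_nonneg_left (clamp_lip _ _ _ _) hL.le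
  have hcontF : ∀ y, Continuous fun x => F x y := fun y => cont_time hf (hcl_pos y)
  -- solutions on each interval [s, s+(n+1)]
  have hsol : ∀ n : ℕ, ∃ ρ : ℝ → ℝ, ρ s = y₀ ∧ ∀ x ∈ Set.Icc s (s+(n+1:ℝ)),
      HasDerivWithinAt ρ (F x (ρ x)) (Set.Icc s (s+(n+1:ℝ))) x := by
    intro n
    have hsub : Set.Icc s (s+(n+1:ℝ)) ×ˢ Set.Icc (δ/2) b ⊆ Set.univ ×ˢ Set.Ioi 0 := by
      rintro ⟨x, y⟩ ⟨_, hy2⟩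
      exact ⟨trivial, lt_of_lt_of_le (by linarith) hy2.1⟩
    obtain ⟨C, hCb⟩ := (isCompact_Icc.prod isCompact_Icc).exists_bound_of_continuousOn
      (hf.mono hsub)
    have hC : ∀ x ∈ Set.Icc s (s+(n+1:ℝ)), ∀ y : ℝ, |F x y| ≤ C := by
      intro x hx y
      have := hCb (x, cl y) ⟨hx, hcl_mem y⟩
      simpa [Real.norm_eq_abs] using this
    exact exists_local_sol hL.le hlipF hcontF hC ⟨le_refl _, by linarith⟩ y₀
  choose Sol hSol0 hSold using hsol
  -- basic properties on each interval
  have hcontn : ∀ n, ContinuousOn (Sol n) (Set.Icc s (s+(n+1:ℝ))) :=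
    fun n x hx => (hSold n x hx).continuousWithinAt
  have hDAt : ∀ n : ℕ, ∀ x ∈ Set.Ioo s (s+((n:ℝ)+1)), HasDerivAt (Sol n) (F x (Sol n x)) x :=
    fun n x hx => (hSold n x ⟨hx.1.le, hx.2.le⟩).hasDerivAt (Icc_mem_nhds hx.1 hx.2)
  have hlow : ∀ n : ℕ, ∀ x ∈ Set.Icc s (s+((n:ℝ)+1)), δ ≤ Sol n x := by
    intro n
    apply barrier_ge (hcontn n) (hDAt n)
    · intro x hx hxδ
      have hmin : min b (Sol n x) = Sol n x := min_eq_right (by linarith)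
      have hclx : cl (Sol n x) < δ := by
        rw [hcl]; simp only [hmin]
        exact max_lt (by linarith) hxδ
      have h1 := hsmall x (cl (Sol n x)) (hcl_pos _) hclx
      have h2 : 0 < c / (2 * cl (Sol n x)) := by positivity
      exact le_of_lt (lt_of_lt_of_le h2 h1)
    · rw [hSol0 n]; exact hy
  have hhigh : ∀ n : ℕ, ∀ x ∈ Set.Icc s (s+((n:ℝ)+1)), Sol n x ≤ B := by
    intro n
    apply barrier_le (hcontn n) (hDAt n)
    · intro x hx hxB
      have hcl_ge : R₀ ≤ cl (Sol n x) := by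
        rcases le_total b (Sol n x) with h | h
        · have : min b (Sol n x) = b := min_eq_left h
          rw [hcl]; simp only [this]
          exact le_max_of_le_right (by linarith)
        · have : min b (Sol n x) = Sol n x := min_eq_right h
          rw [hcl]; simp only [this]
          exact le_max_of_le_right (by linarith)
      exact (hlarge x _ hcl_ge).trans (by norm_num)
    · rw [hSol0 n]; exact le_max_left _ _
  have hfix : ∀ n : ℕ, ∀ x ∈ Set.Icc s (s+((n:ℝ)+1)), F x (Sol n x) = f x (Sol n x) := by
    intro n x hx
    rw [hF]
    simp only
    rw [hcl_fix _ (hlow n x hx) (hhigh n x hx)]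
  -- consistency
  have hLnn : ∀ t : ℝ, LipschitzWith L.toNNReal (F t) := by
    intro t
    apply LipschitzWith.of_dist_le_mul
    intro y₁ y₂
    rw [Real.dist_eq, Real.dist_eq, Real.coe_toNNReal L hL.le]
    exact hlipF t y₁ y₂
  have hderiv_Ici : ∀ n : ℕ, ∀ x ∈ Set.Ico s (s+((n:ℝ)+1)),
      HasDerivWithinAt (Sol n) (F x (Sol n x)) (Set.Ici x) x := by
    intro n x hx
    exact (hSold n x ⟨hx.1, hx.2.le⟩).mono_of_mem_nhdsWithin (Icc_mem_nhdsGE_of_mem hx)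
  have hcons : ∀ m n : ℕ, m ≤ n → ∀ x ∈ Set.Icc s (s+(m+1:ℝ)), Sol m x = Sol n x := by
    intro m n hmn x hx
    have hcast : (m:ℝ)+1 ≤ (n:ℝ)+1 := by exact_mod_cast by omega
    have hsub2 : Set.Icc s (s+(m+1:ℝ)) ⊆ Set.Icc s (s+(n+1:ℝ)) :=
      Set.Icc_subset_Icc_right (by linarith)
    have := ODE_solution_unique (v := F) hLnn (hcontn m)
      (fun z hz => hderiv_Ici m z hz) ((hcontn n).mono hsub2)
      (fun z hz => hderiv_Ici n z ⟨hz.1, lt_of_lt_of_le hz.2 (by linarith)⟩)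
      (by rw [hSol0 m, hSol0 n])
    exact this hx
  set ρ : ℝ → ℝ := fun x => Sol ⌈x - s⌉₊ x with hρdef
  have hmem_ceil : ∀ x, s ≤ x → x ∈ Set.Icc s (s+((⌈x - s⌉₊:ℝ)+1)) := by
    intro x hx
    exact ⟨hx, by linarith [Nat.le_ceil (x - s)]⟩
  have hρeq : ∀ n : ℕ, ∀ x ∈ Set.Icc s (s+(n+1:ℝ)), ρ x = Sol n x := by
    intro n x hx
    rcases le_total ⌈x - s⌉₊ n with h | h
    · exact hcons _ n h x (hmem_ceil x hx.1)
    · exact (hcons n _ h x hx).symm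
  refine ⟨ρ, ?_, ?_, ?_, ?_, ?_⟩
  · have := hρeq 0 s ⟨le_refl _, by linarith⟩
    rw [this, hSol0 0]
  · intro x hx
    have hm := hmem_ceil x hx
    rw [hρeq _ x hm]
    exact ⟨hlow _ x hm, hhigh _ x hm⟩
  · intro x hx
    set n := ⌈x - s⌉₊ + 1 with hn
    have hxm : x ∈ Set.Ioo s (s+(n+1:ℝ)) := by
      constructor
      · exact hx
      · push_cast [hn]; linarith [Nat.le_ceil (x - s)]
    have hDA := hDAt n x hxm
    rw [hfix n x ⟨hxm.1.le, hxm.2.le⟩] at hDA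
    have hev : ρ =ᶠ[nhds x] Sol n := by
      filter_upwards [Ioo_mem_nhds hxm.1 hxm.2] with y hy
      exact hρeq n y ⟨hy.1.le, hy.2.le⟩
    have := hDA.congr_of_eventuallyEq hev
    rwa [← hρeq n x ⟨hxm.1.le, hxm.2.le⟩] at this
  · have h0 := hSold 0 s ⟨le_refl _, by linarith⟩
    have hval : F s (Sol 0 s) = f s y₀ := by
      rw [hSol0 0, hF]
      simp only
      rw [hcl_fix _ hy (le_max_left _ _)]
    rw [hval] at h0
    have hcg : HasDerivWithinAt ρ (f s y₀) (Set.Icc s (s+(((0:ℕ):ℝ)+1))) s := by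
      apply h0.congr
      · intro y hy
        exact hρeq 0 y hy
      · exact hρeq 0 s ⟨le_refl _, by norm_num⟩
    exact hcg.mono_of_mem_nhdsWithin (Icc_mem_nhdsGE_of_mem ⟨le_refl _, by norm_num⟩)
  · intro x hx
    set n := ⌈x - s⌉₊ with hn
    have hm := hmem_ceil x hx
    have hcw : ContinuousWithinAt ρ (Set.Icc s (s+(n+1:ℝ))) x := by
      apply ((hcontn n) x hm).congr
      · intro y hy
        exact hρeq n y hy
      · exact hρeq n x hm
    apply hcw.mono_of_mem_nhdsWithin
    have : Set.Icc s (s+(n+1:ℝ)) = Set.Ici s ∩ Set.Iic (s+(n+1:ℝ)) := (Set.Ici_inter_Iic).symm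
    rw [this]
    apply Filter.inter_mem self_mem_nhdsWithin
    apply mem_nhdsWithin_of_mem_nhds
    apply Iic_mem_nhds
    linarith [Nat.le_ceil (x - s)]

/-- Existence of an incoming solution through `(t, R₀)`. -/
lemma incoming_exists {f : ℝ → ℝ → ℝ} {δ R₀ K : ℝ}
    (hf : ContinuousOn (fun p : ℝ × ℝ => f p.1 p.2) (Set.univ ×ˢ Set.Ioi 0))
    (hlip : ∀ a b : ℝ, 0 < a → a < b → ∃ L > 0, ∀ x : ℝ,
      ∀ r₁ ∈ Set.Icc a b, ∀ r₂ ∈ Set.Icc a b, |f x r₁ - f x r₂| ≤ L * |r₁ - r₂|)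
    (hδ : 0 < δ) (hR₀ : δ < R₀)
    (hlarge : ∀ x r : ℝ, R₀ ≤ r → f x r ≤ -(1:ℝ)/2)
    (hK : 0 < K) (hbdd : ∀ x r : ℝ, δ ≤ r → |f x r| ≤ K)
    (t : ℝ) :
    ∃ r : ℝ → ℝ, r ∈ incomingSolutions f t ∧ r t = R₀ := by
  have hR₀pos : 0 < R₀ := hδ.trans hR₀
  -- clamped fields, one per n
  set bb : ℕ → ℝ := fun n => R₀ + K * ((n:ℝ)+1) + 1 with hbb
  have hbgt : ∀ n : ℕ, R₀ < bb n := by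
    intro n
    have : 0 < K * ((n:ℝ)+1) := by positivity
    simp only [hbb]; linarith
  set cln : ℕ → ℝ → ℝ := fun n y => max R₀ (min (bb n) y) with hcln
  set Fn : ℕ → ℝ → ℝ → ℝ := fun n x y => f x (cln n y) with hFn
  have hcl_mem : ∀ n y, cln n y ∈ Set.Icc R₀ (bb n) := by
    intro n y
    exact ⟨le_max_left _ _, max_le (hbgt n).le (min_le_left _ _)⟩
  have hcl_fix : ∀ n y, R₀ ≤ y → y ≤ bb n → cln n y = y := by
    intro n y h1 h2
    simp only [hcln]
    rw [min_eq_right h2]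
    exact max_eq_right h1
  have hFbdd : ∀ n x y, |Fn n x y| ≤ K := by
    intro n x y
    exact hbdd x _ (hR₀.le.trans (hcl_mem n y).1)
  have hlipFn : ∀ n : ℕ, ∃ L > 0, ∀ x y₁ y₂ : ℝ, |Fn n x y₁ - Fn n x y₂| ≤ L * |y₁ - y₂| := by
    intro n
    obtain ⟨L, hL, hLf⟩ := hlip R₀ (bb n) hR₀pos (hbgt n)
    refine ⟨L, hL, fun x y₁ y₂ => ?_⟩
    calc |Fn n x y₁ - Fn n x y₂| ≤ L * |cln n y₁ - cln n y₂| :=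
          hLf x _ (hcl_mem n y₁) _ (hcl_mem n y₂)
    _ ≤ L * |y₁ - y₂| := mul_le_mul_of_nonneg_left (clamp_lip _ _ _ _) hL.le
  choose Ln hLn hlipF using hlipFn
  have hcontFn : ∀ n y, Continuous fun x => Fn n x y := by
    intro n y
    exact cont_time hf (hR₀pos.trans_le (hcl_mem n y).1)
  -- solutions on [t-(n+1), t]
  have hsol : ∀ n : ℕ, ∃ ρ : ℝ → ℝ, ρ t = R₀ ∧ ∀ x ∈ Set.Icc (t-((n:ℝ)+1)) t,
      HasDerivWithinAt ρ (Fn n x (ρ x)) (Set.Icc (t-((n:ℝ)+1)) t) x := by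
    intro n
    apply exists_local_sol (hLn n).le (hlipF n) (hcontFn n)
      (fun x _ y => hFbdd n x y)
    constructor
    · have : (0:ℝ) ≤ (n:ℝ)+1 := by positivity
      linarith
    · exact le_refl _
  choose Sol hSol0 hSold using hsol
  have hcontn : ∀ n, ContinuousOn (Sol n) (Set.Icc (t-((n:ℝ)+1)) t) :=
    fun n x hx => (hSold n x hx).continuousWithinAt
  have hDAt : ∀ n : ℕ, ∀ x ∈ Set.Ioo (t-((n:ℝ)+1)) t, HasDerivAt (Sol n) (Fn n x (Sol n x)) x :=
    fun n x hx => (hSold n x ⟨hx.1.le, hx.2.le⟩).hasDerivAt (Icc_mem_nhds hx.1 hx.2)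
  -- lower barrier R₀
  have hlow : ∀ n : ℕ, ∀ x ∈ Set.Icc (t-((n:ℝ)+1)) t, R₀ ≤ Sol n x := by
    intro n
    apply barrier_ge_backward (hcontn n) (hDAt n)
    · intro x hx hxR
      have hmin : min (bb n) (Sol n x) = Sol n x := min_eq_right (by linarith [hbgt n])
      have : cln n (Sol n x) = R₀ := by
        simp only [hcln]; rw [hmin]
        exact max_eq_left hxR.le
      show Fn n x (Sol n x) ≤ 0
      simp only [hFn]
      rw [this]
      exact (hlarge x R₀ (le_refl _)).trans (by norm_num)
    · rw [hSol0 n]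
  -- upper bound via Lipschitz bound on the derivative
  have hup : ∀ n : ℕ, ∀ x ∈ Set.Icc (t-((n:ℝ)+1)) t, Sol n x ≤ R₀ + K * ((n:ℝ)+1) := by
    intro n x hx
    have hlipSol : ‖Sol n x - Sol n t‖ ≤ K * ‖x - t‖ := by
      apply Convex.norm_image_sub_le_of_norm_hasDerivWithin_le
        (fun z hz => hSold n z hz) (fun z _ => by rw [Real.norm_eq_abs]; exact hFbdd n z _)
        (convex_Icc _ _) ⟨by have hn0 : (0:ℝ) ≤ (n:ℝ) := Nat.cast_nonneg n; linarith, le_refl _⟩ hx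
    rw [Real.norm_eq_abs, Real.norm_eq_abs, hSol0 n] at hlipSol
    have h1 : Sol n x - R₀ ≤ |Sol n x - R₀| := le_abs_self _
    have h2 : |x - t| ≤ (n:ℝ)+1 := by
      rw [abs_le]; constructor <;> [linarith [hx.1]; linarith [hx.2]]
    nlinarith [abs_nonneg (x - t)]
  have hfix : ∀ n : ℕ, ∀ x ∈ Set.Icc (t-((n:ℝ)+1)) t, Fn n x (Sol n x) = f x (Sol n x) := by
    intro n x hx
    simp only [hFn]
    rw [hcl_fix n _ (hlow n x hx) ((hup n x hx).trans (by simp only [hbb]; linarith))]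
  -- consistency: any two solutions agree; uses the larger field
  have hderiv_Iic : ∀ n : ℕ, ∀ x ∈ Set.Ioc (t-((n:ℝ)+1)) t,
      HasDerivWithinAt (Sol n) (f x (Sol n x)) (Set.Iic x) x := by
    intro n x hx
    have h := (hSold n x ⟨hx.1.le, hx.2⟩).mono_of_mem_nhdsWithin
      (Icc_mem_nhdsLE_of_mem ⟨hx.1, hx.2⟩)
    rwa [hfix n x ⟨hx.1.le, hx.2⟩] at h
  have hcons : ∀ m n : ℕ, m ≤ n → ∀ x ∈ Set.Icc (t-((m:ℝ)+1)) t, Sol m x = Sol n x := by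
    intro m n hmn x hx
    have hcast : (m:ℝ) ≤ (n:ℝ) := by exact_mod_cast hmn
    have hsub2 : Set.Icc (t-((m:ℝ)+1)) t ⊆ Set.Icc (t-((n:ℝ)+1)) t :=
      Set.Icc_subset_Icc_left (by linarith)
    -- work with the field Fn n, both solutions take values in its fixed region
    have hm_fix : ∀ z ∈ Set.Icc (t-((m:ℝ)+1)) t, Fn n z (Sol m z) = f z (Sol m z) := by
      intro z hz
      simp only [hFn]
      rw [hcl_fix n _ (hlow m z hz) (((hup m z hz)).trans (by simp only [hbb]; nlinarith))]
    have hLnn : ∀ x : ℝ, LipschitzOnWith (Ln n).toNNReal (Fn n x) Set.univ := by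
      intro x
      apply LipschitzWith.lipschitzOnWith
      apply LipschitzWith.of_dist_le_mul
      intro y₁ y₂
      rw [Real.dist_eq, Real.dist_eq, Real.coe_toNNReal _ (hLn n).le]
      exact hlipF n x y₁ y₂
    have := ODE_solution_unique_of_mem_Icc_left (v := Fn n) (s := fun _ => Set.univ)
      (fun z _ => hLnn z) (hcontn m)
      (fun z hz => by
        have h := hderiv_Iic m z hz
        rwa [← hm_fix z ⟨hz.1.le, hz.2⟩] at h)
      (fun z _ => trivial)
      ((hcontn n).mono hsub2)
      (fun z hz => by
        have h := hderiv_Iic n z ⟨by linarith [hz.1], hz.2⟩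
        rwa [← hfix n z ⟨by linarith [hz.1], hz.2⟩] at h)
      (fun z _ => trivial)
      (by rw [hSol0 m, hSol0 n])
    exact this hx
  set r : ℝ → ℝ := fun x => Sol ⌈t - x⌉₊ x with hrdef
  have hmem_ceil : ∀ x, x ≤ t → x ∈ Set.Icc (t-((⌈t - x⌉₊:ℝ)+1)) t := by
    intro x hx
    exact ⟨by linarith [Nat.le_ceil (t - x)], hx⟩
  have hreq : ∀ n : ℕ, ∀ x ∈ Set.Icc (t-((n:ℝ)+1)) t, r x = Sol n x := by
    intro n x hx
    rcases le_total ⌈t - x⌉₊ n with h | h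
    · exact hcons _ n h x (hmem_ceil x hx.2)
    · exact (hcons n _ h x hx).symm
  have hrt : r t = R₀ := by
    have := hreq 0 t ⟨by norm_num, le_refl _⟩
    rw [this, hSol0 0]
  -- derivative of r at interior points
  have hrDA : ∀ x ∈ Set.Iio t, HasDerivAt r (f x (r x)) x := by
    intro x hx
    set n := ⌈t - x⌉₊ + 1 with hn
    have hxm : x ∈ Set.Ioo (t-((n:ℝ)+1)) t := by
      constructor
      · push_cast [hn]; linarith [Nat.le_ceil (t - x)]
      · exact hx
    have hDA := hDAt n x hxm
    rw [hfix n x ⟨hxm.1.le, hxm.2.le⟩] at hDA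
    have hev : r =ᶠ[nhds x] Sol n := by
      filter_upwards [Ioo_mem_nhds hxm.1 hxm.2] with y hy
      exact hreq n y ⟨hy.1.le, hy.2.le⟩
    have := hDA.congr_of_eventuallyEq hev
    rwa [← hreq n x ⟨hxm.1.le, hxm.2.le⟩] at this
  have hrlow : ∀ x ∈ Set.Iic t, R₀ ≤ r x := by
    intro x hx
    have hm := hmem_ceil x hx
    rw [hreq _ x hm]
    exact hlow _ x hm
  -- derivative within Iic t
  have hrD : ∀ x ∈ Set.Iic t, HasDerivWithinAt r (f x (r x)) (Set.Iic t) x := by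
    intro x hx
    rcases lt_or_eq_of_le (show x ≤ t from hx) with h | h
    · exact (hrDA x h).hasDerivWithinAt
    · subst h
      have h0 := hderiv_Iic 0 x ⟨by norm_num, le_refl _⟩
      have hcg : HasDerivWithinAt r (f x (Sol 0 x)) (Set.Iic x) x := by
        apply h0.congr_of_eventuallyEq_of_mem ?_ (le_refl x)
        · filter_upwards [Icc_mem_nhdsLE_of_mem (show x ∈ Set.Ioc (x-((0:ℕ)+1:ℝ)) x by
            constructor <;> norm_num)] with y hy
          exact hreq 0 y hy
      rw [← hreq 0 x ⟨by norm_num, le_refl _⟩] at hcg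
      exact hcg
  -- growth backwards
  have hgrow : ∀ x ∈ Set.Iic t, R₀ + (t - x)/2 ≤ r x := by
    intro x hx
    rcases eq_or_lt_of_le (show x ≤ t from hx) with h | h
    · subst h; simpa using hrt.ge
    · have hcont_r : ContinuousOn r (Set.Icc x t) := by
        intro y hy
        rcases lt_or_eq_of_le hy.2 with h' | h'
        · exact ((hrDA y h').continuousAt).continuousWithinAt
        · subst h'
          exact ((hrD y (Set.mem_Iic.2 (le_refl _))).continuousWithinAt).mono
            (fun z hz => hz.2)
      have hanti : AntitoneOn (fun y => r y + y/2) (Set.Icc x t) := by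
        apply antitoneOn_of_deriv_nonpos (convex_Icc _ _)
        · exact (hcont_r.add (continuous_id.continuousOn.div_const 2))
        · intro y hy
          rw [interior_Icc] at hy
          exact (((hrDA y hy.2).add ((hasDerivAt_id y).div_const 2)).differentiableAt).differentiableWithinAt
        · intro y hy
          rw [interior_Icc] at hy
          have hD : HasDerivAt (fun y => r y + y/2) (f y (r y) + 1/2) y := by
            have := (hrDA y hy.2).add ((hasDerivAt_id y).div_const 2)
            simpa [Pi.add_def] using this
          rw [hD.deriv]
          linarith [hlarge y (r y) (hrlow y (Set.mem_Iic.2 (le_of_lt hy.2)))]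
      have := hanti ⟨le_refl _, hx⟩ ⟨hx, le_refl _⟩ hx
      simp only at this
      rw [hrt] at this
      linarith
  refine ⟨r, ⟨?_, hrD, ?_⟩, hrt⟩
  · intro x hx
    exact hR₀pos.trans_le (hrlow x hx)
  · apply tendsto_atTop_mono' atBot (f₁ := fun x => R₀ + (t - x)/2)
    · filter_upwards [Iic_mem_atBot t] with x hx
      exact hgrow x hx
    · apply tendsto_atTop_add_const_left
      apply Filter.Tendsto.atTop_div_const (by norm_num : (0:ℝ) < 2)
      have : Tendsto (fun x : ℝ => -x) atBot atTop := tendsto_neg_atBot_atTop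
      have h2 := tendsto_atTop_add_const_left atBot t this
      exact h2.congr (fun x => (sub_eq_add_neg t x).symm)

/-- Any incoming solution stays above `δ`. -/
lemma incoming_ge_delta {f : ℝ → ℝ → ℝ} {δ c : ℝ}
    (hδ : 0 < δ) (hc : 0 < c)
    (hsmall : ∀ x r : ℝ, 0 < r → r < δ → c / (2 * r) ≤ f x r)
    {t : ℝ} {r : ℝ → ℝ} (hr : r ∈ incomingSolutions f t) :
    ∀ x ∈ Set.Iic t, δ ≤ r x := by
  obtain ⟨hpos, hD, htend⟩ := hr
  by_contra hcon
  push_neg at hcon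
  obtain ⟨x₁, hx₁, hlt⟩ := hcon
  obtain ⟨a, ha⟩ := (htend.eventually_ge_atTop δ).exists_forall_of_atBot
  rcases le_total x₁ a with h | h
  · exact absurd (ha x₁ h) (not_le.2 hlt)
  · -- a ≤ x₁, apply the barrier on [a, x₁]
    have hsub : Set.Icc a x₁ ⊆ Set.Iic t := fun y hy => hy.2.trans hx₁
    have hδr : δ ≤ r x₁ := by
      apply barrier_ge (s := a) (t := x₁) (g := fun y => f y (r y))
        (fun y hy => ((hD y (hsub hy)).continuousWithinAt).mono hsub)
        (fun y hy => (hD y (hsub ⟨hy.1.le, hy.2.le⟩)).hasDerivAt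
          (Iic_mem_nhds (lt_of_lt_of_le hy.2 hx₁)))
        ?_ (ha a (le_refl _)) x₁ ⟨h, le_refl _⟩
      intro y hy hyδ
      have h1 := hsmall y (r y) (hpos y (hsub ⟨hy.1.le, hy.2.le⟩)) hyδ
      have h2 : 0 < c / (2 * r y) := by
        have := hpos y (hsub ⟨hy.1.le, hy.2.le⟩); positivity
      linarith
    exact absurd hδr (not_le.2 hlt)

/-- Comparison: solutions of the same scalar ODE cannot cross (forward in time). -/
lemma compare {f : ℝ → ℝ → ℝ} {δ : ℝ}
    (hlip : ∀ a b : ℝ, 0 < a → a < b → ∃ L > 0, ∀ x : ℝ,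
      ∀ r₁ ∈ Set.Icc a b, ∀ r₂ ∈ Set.Icc a b, |f x r₁ - f x r₂| ≤ L * |r₁ - r₂|)
    (hδ : 0 < δ) {s t b : ℝ} {r₁ r₂ : ℝ → ℝ} (hb : δ < b)
    (hc₁ : ContinuousOn r₁ (Set.Icc s t))
    (hd₁ : ∀ x ∈ Set.Ico s t, HasDerivWithinAt r₁ (f x (r₁ x)) (Set.Ici x) x)
    (hm₁ : ∀ x ∈ Set.Icc s t, r₁ x ∈ Set.Icc δ b)
    (hc₂ : ContinuousOn r₂ (Set.Icc s t))
    (hd₂ : ∀ x ∈ Set.Ico s t, HasDerivWithinAt r₂ (f x (r₂ x)) (Set.Ici x) x)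
    (hm₂ : ∀ x ∈ Set.Icc s t, r₂ x ∈ Set.Icc δ b)
    (h0 : r₁ s ≤ r₂ s) :
    ∀ x ∈ Set.Icc s t, r₁ x ≤ r₂ x := by
  set cl : ℝ → ℝ := fun y => max (δ/2) (min b y) with hcl
  set F : ℝ → ℝ → ℝ := fun x y => f x (cl y) with hF
  obtain ⟨L, hL, hLf⟩ := hlip (δ/2) b (by linarith) (by linarith)
  have hcl_mem : ∀ y, cl y ∈ Set.Icc (δ/2) b :=
    fun y => ⟨le_max_left _ _, max_le (by linarith) (min_le_left _ _)⟩
  have hcl_fix : ∀ y, δ ≤ y → y ≤ b → cl y = y := by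
    intro y h1 h2
    simp only [hcl]
    rw [min_eq_right h2]
    exact max_eq_right (by linarith)
  have hLnn : ∀ x : ℝ, LipschitzWith L.toNNReal (F x) := by
    intro x
    apply LipschitzWith.of_dist_le_mul
    intro y₁ y₂
    rw [Real.dist_eq, Real.dist_eq, Real.coe_toNNReal _ hL.le]
    calc |F x y₁ - F x y₂| ≤ L * |cl y₁ - cl y₂| := hLf x _ (hcl_mem y₁) _ (hcl_mem y₂)
    _ ≤ L * |y₁ - y₂| := mul_le_mul_of_nonneg_left (clamp_lip _ _ _ _) hL.le
  by_contra hcon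
  push_neg at hcon
  obtain ⟨x₁, hx₁, hgt⟩ := hcon
  set A : Set ℝ := Set.Icc s x₁ ∩ (fun x => r₂ x - r₁ x) ⁻¹' (Set.Ici 0) with hA
  have hsub1 : Set.Icc s x₁ ⊆ Set.Icc s t := Set.Icc_subset_Icc_right hx₁.2
  have hAclosed : IsClosed A :=
    (((hc₂.mono hsub1).sub (hc₁.mono hsub1))).preimage_isClosed_of_isClosed
      isClosed_Icc isClosed_Ici
  have hsA : s ∈ A := ⟨⟨le_refl _, hx₁.1⟩, by simp [sub_nonneg, h0]⟩
  have hbddA : BddAbove A := BddAbove.mono Set.inter_subset_left bddAbove_Icc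
  set w := sSup A with hw
  have hwA : w ∈ A := hAclosed.csSup_mem ⟨s, hsA⟩ hbddA
  have hw12 : r₁ w ≤ r₂ w := by
    have := hwA.2
    simp only [Set.mem_preimage, Set.mem_Ici, sub_nonneg] at this
    exact this
  have hwx₁ : w < x₁ := by
    rcases lt_or_eq_of_le hwA.1.2 with h | h
    · exact h
    · rw [h] at hw12; exact absurd hw12 (not_le.2 hgt)
  have hws : s ≤ w := hwA.1.1
  have hlt2 : ∀ x ∈ Set.Ioc w x₁, r₂ x < r₁ x := by
    intro x hx
    by_contra h
    push_neg at h
    exact absurd (le_csSup hbddA ⟨⟨hws.trans hx.1.le, hx.2⟩, by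
      simp [Set.mem_preimage, sub_nonneg, h]⟩) (not_le.2 hx.1)
  -- by continuity, r₁ w = r₂ w
  have hwm : w ∈ Set.Icc s t := ⟨hws, hwx₁.le.trans hx₁.2⟩
  have hweq : r₁ w = r₂ w := by
    refine le_antisymm hw12 ?_
    have hcw : ContinuousWithinAt (fun x => r₁ x - r₂ x) (Set.Ioo w x₁) w := by
      apply (((hc₁ w hwm).sub (hc₂ w hwm))).mono
      intro y hy
      exact ⟨hws.trans hy.1.le, hy.2.le.trans hx₁.2⟩
    have hne2 : (nhdsWithin w (Set.Ioo w x₁)).NeBot := by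
      rw [nhdsWithin_Ioo_eq_nhdsGT hwx₁]
      infer_instance
    have hlim : 0 ≤ r₁ w - r₂ w := by
      refine ge_of_tendsto hcw ?_
      filter_upwards [self_mem_nhdsWithin] with x hx
      linarith [hlt2 x ⟨hx.1, hx.2.le⟩]
    linarith
  have hsubw : Set.Icc w x₁ ⊆ Set.Icc s t := Set.Icc_subset_Icc hws hx₁.2
  have key := ODE_solution_unique (v := F) hLnn (hc₁.mono hsubw)
    (fun z hz => by
      have hzm : z ∈ Set.Icc s t := ⟨hws.trans hz.1, hz.2.le.trans hx₁.2⟩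
      have h := hd₁ z ⟨hzm.1, lt_of_lt_of_le hz.2 hx₁.2⟩
      have hfx : F z (r₁ z) = f z (r₁ z) := by
        simp only [hF]; rw [hcl_fix _ (hm₁ z hzm).1 (hm₁ z hzm).2]
      rwa [← hfx] at h)
    (hc₂.mono hsubw)
    (fun z hz => by
      have hzm : z ∈ Set.Icc s t := ⟨hws.trans hz.1, hz.2.le.trans hx₁.2⟩
      have h := hd₂ z ⟨hzm.1, lt_of_lt_of_le hz.2 hx₁.2⟩
      have hfx : F z (r₂ z) = f z (r₂ z) := by
        simp only [hF]; rw [hcl_fix _ (hm₂ z hzm).1 (hm₂ z hzm).2]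
      rwa [← hfx] at h)
    hweq
  have hfin := key ⟨hwx₁.le, le_refl x₁⟩
  linarith


end WhiteHole

open WhiteHole Set

/-- Remark 4.1 (white-hole analogue of Theorem 4.2): for the incoming
characteristic ODE `r' = f(x₀, r)` with `f ≥ c/(2r)` near `r = 0` and `f ≤ -1/2`
for large `r`, there is a global positive bounded solution `R⁻` which at each
time `t` equals the infimum of the values at `t` of all solutions tending to
`+∞` as `x → -∞`. -/
theorem white_hole_horizon_exists (f : ℝ → ℝ → ℝ)
    (hf : ContinuousOn (fun p : ℝ × ℝ => f p.1 p.2) (Set.univ ×ˢ Set.Ioi 0))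
    (hlip : ∀ a b : ℝ, 0 < a → a < b → ∃ L > 0, ∀ x : ℝ,
      ∀ r₁ ∈ Set.Icc a b, ∀ r₂ ∈ Set.Icc a b, |f x r₁ - f x r₂| ≤ L * |r₁ - r₂|)
    (δ c R₀ K : ℝ) (hδ : 0 < δ) (hc : 0 < c)
    (hsmall : ∀ x r : ℝ, 0 < r → r < δ → c / (2 * r) ≤ f x r)
    (hR₀ : δ < R₀) (hlarge : ∀ x r : ℝ, R₀ ≤ r → f x r ≤ -(1 : ℝ) / 2)
    (hK : 0 < K) (hbdd : ∀ x r : ℝ, δ ≤ r → |f x r| ≤ K) :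
    ∃ m M : ℝ, 0 < m ∧ m ≤ M ∧
      ∃ R : ℝ → ℝ,
        (∀ x, m ≤ R x ∧ R x ≤ M) ∧
        (∀ x, HasDerivAt R (f x (R x)) x) ∧
        ∀ t : ℝ, R t = sInf ((fun r : ℝ → ℝ => r t) '' incomingSolutions f t) := by
  classical
  set S : ℝ → Set ℝ := fun t => (fun r : ℝ → ℝ => r t) '' incomingSolutions f t with hS
  set d : ℝ → ℝ := fun t => sInf (S t) with hd
  -- monotonicity of the family
  have hmono : ∀ {s t : ℝ}, s ≤ t → incomingSolutions f t ⊆ incomingSolutions f s := by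
    rintro s t hst r ⟨h1, h2, h3⟩
    exact ⟨fun x hx => h1 x (Set.mem_Iic.2 ((Set.mem_Iic.1 hx).trans hst)),
      fun x hx => (h2 x (Set.mem_Iic.2 ((Set.mem_Iic.1 hx).trans hst))).mono
        (Set.Iic_subset_Iic.2 hst), h3⟩
  have hlower : ∀ t : ℝ, ∀ v ∈ S t, δ ≤ v := by
    rintro t v ⟨r, hr, rfl⟩
    exact incoming_ge_delta hδ hc hsmall hr t (Set.mem_Iic.2 (le_refl t))
  have hne : ∀ t : ℝ, (S t).Nonempty := by
    intro t
    obtain ⟨r, hr, hrt⟩ := incoming_exists hf hlip hδ hR₀ hlarge hK hbdd t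
    exact ⟨R₀, r, hr, hrt⟩
  have hbddS : ∀ t : ℝ, BddBelow (S t) := fun t => ⟨δ, hlower t⟩
  have hdδ : ∀ t, δ ≤ d t := fun t => le_csInf (hne t) (hlower t)
  have hdR₀ : ∀ t, d t ≤ R₀ := by
    intro t
    obtain ⟨r, hr, hrt⟩ := incoming_exists hf hlip hδ hR₀ hlarge hK hbdd t
    have : R₀ ∈ S t := ⟨r, hr, hrt⟩
    exact csInf_le (hbddS t) this
  -- generic facts about incoming solutions
  have hDIci : ∀ (t : ℝ) (r : ℝ → ℝ), r ∈ incomingSolutions f t → ∀ x : ℝ, x < t →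
      HasDerivWithinAt r (f x (r x)) (Set.Ici x) x := by
    intro t r hr x hx
    exact ((hr.2.1 x (Set.mem_Iic.2 hx.le)).hasDerivAt (Iic_mem_nhds hx)).hasDerivWithinAt
  have hcontIcc : ∀ (t : ℝ) (r : ℝ → ℝ), r ∈ incomingSolutions f t → ∀ s : ℝ,
      ContinuousOn r (Set.Icc s t) := by
    intro t r hr s y hy
    exact ((hr.2.1 y (Set.mem_Iic.2 hy.2)).continuousWithinAt).mono (fun z hz => hz.2)
  -- extension of an incoming solution forward in time
  have hext : ∀ s t : ℝ, s ≤ t → ∀ r ∈ incomingSolutions f s,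
      ∃ r' ∈ incomingSolutions f t, r' s = r s ∧
        ∀ x ∈ Set.Icc s t, δ ≤ r' x ∧ r' x ≤ max (r s) R₀ := by
    intro s t hst r hr
    have hrs : δ ≤ r s := incoming_ge_delta hδ hc hsmall hr s (Set.mem_Iic.2 (le_refl s))
    obtain ⟨ρ, hρ0, hρb, hρDA, hρDs, hρc⟩ :=
      forward_exists hf hlip hδ hc hsmall hR₀ hlarge s (r s) hrs
    set r' : ℝ → ℝ := fun x => if x ≤ s then r x else ρ x with hr'
    have hleft : ∀ x : ℝ, x ≤ s → r' x = r x := fun x hx => if_pos hx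
    have hright : ∀ x : ℝ, s ≤ x → r' x = ρ x := by
      intro x hx
      by_cases h : x ≤ s
      · have hxs : x = s := le_antisymm h hx
        subst hxs
        rw [hleft x (le_refl x), hρ0]
      · exact if_neg h
    have hmem : r' ∈ incomingSolutions f t := by
      refine ⟨?_, ?_, ?_⟩
      · intro x hx
        by_cases h : x ≤ s
        · rw [hleft x h]; exact hr.1 x (Set.mem_Iic.2 h)
        · push_neg at h
          rw [hright x h.le]
          exact lt_of_lt_of_le hδ (hρb x (Set.mem_Ici.2 h.le)).1
      · intro x hx
        rcases lt_trichotomy x s with h | h | h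
        · have hDA := (hr.2.1 x (Set.mem_Iic.2 h.le)).hasDerivAt (Iic_mem_nhds h)
          have hev : r' =ᶠ[nhds x] r :=
            eventually_of_mem (Iic_mem_nhds h) (fun y hy => hleft y hy)
          have := hDA.congr_of_eventuallyEq hev
          rw [← hleft x h.le] at this
          exact this.hasDerivWithinAt
        · subst h
          have d₁ : HasDerivWithinAt r' (f x (r x)) (Set.Iic x) x :=
            (hr.2.1 x (Set.mem_Iic.2 (le_refl x))).congr
              (fun y hy => hleft y hy) (hleft x (le_refl x))
          have d₂ : HasDerivWithinAt r' (f x (r x)) (Set.Ici x) x :=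
            hρDs.congr (fun y hy => hright y hy) (hright x (le_refl x))
          have hu := d₁.union d₂
          rw [Set.Iic_union_Ici] at hu
          have := (hasDerivWithinAt_univ.1 hu)
          rw [← hleft x (le_refl x)] at this
          exact this.hasDerivWithinAt
        · have hDA := hρDA x (Set.mem_Ioi.2 h)
          have hev : r' =ᶠ[nhds x] ρ :=
            eventually_of_mem (Ioi_mem_nhds h) (fun y hy => hright y (Set.mem_Ioi.1 hy).le)
          have := hDA.congr_of_eventuallyEq hev
          rw [← hright x h.le] at this
          exact this.hasDerivWithinAt
      · apply hr.2.2.congr'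
        filter_upwards [Iic_mem_atBot s] with y hy
        exact (hleft y hy).symm
    refine ⟨r', hmem, hleft s (le_refl s), ?_⟩
    intro x hx
    rw [hright x hx.1]
    exact hρb x (Set.mem_Ici.2 hx.1)
  -- transport of the infimum along forward solutions
  have htrans : ∀ s : ℝ, ∀ ρ : ℝ → ℝ, ρ s = d s →
      (∀ x ∈ Set.Ici s, δ ≤ ρ x ∧ ρ x ≤ max (d s) R₀) →
      (∀ x ∈ Set.Ioi s, HasDerivAt ρ (f x (ρ x)) x) →
      HasDerivWithinAt ρ (f s (d s)) (Set.Ici s) s → ContinuousOn ρ (Set.Ici s) →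
      ∀ t ∈ Set.Ici s, d t = ρ t := by
    intro s ρ hρ0 hρb hρDA hρDs hρc t ht
    have hst : s ≤ t := ht
    have hmaxd : max (d s) R₀ = R₀ := max_eq_right (hdR₀ s)
    have hρm : ∀ x ∈ Set.Icc s t, ρ x ∈ Set.Icc δ (R₀ + 1) := by
      intro x hx
      refine ⟨(hρb x hx.1).1, ?_⟩
      have := (hρb x hx.1).2
      rw [hmaxd] at this
      linarith
    have hρD : ∀ x ∈ Set.Ico s t, HasDerivWithinAt ρ (f x (ρ x)) (Set.Ici x) x := by
      intro x hx
      rcases eq_or_lt_of_le hx.1 with h | h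
      · subst h
        rw [← hρ0] at hρDs
        exact hρDs
      · exact (hρDA x (Set.mem_Ioi.2 h)).hasDerivWithinAt
    have hρcont : ContinuousOn ρ (Set.Icc s t) := hρc.mono (fun z hz => hz.1)
    -- ρ t ≤ d t
    have hge : ρ t ≤ d t := by
      apply le_csInf (hne t)
      rintro v ⟨r, hr, rfl⟩
      have hrG : r ∈ incomingSolutions f s := hmono hst hr
      have hds : d s ≤ r s := csInf_le (hbddS s) ⟨r, hrG, rfl⟩
      obtain ⟨C, hC⟩ := isCompact_Icc.exists_bound_of_continuousOn (hcontIcc t r hr s)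
      set b : ℝ := max C (R₀ + 1) with hb
      have hδb : δ < b := by
        have : δ < R₀ + 1 := by linarith
        exact lt_of_lt_of_le this (le_max_right _ _)
      have hm₂ : ∀ x ∈ Set.Icc s t, r x ∈ Set.Icc δ b := by
        intro x hx
        refine ⟨incoming_ge_delta hδ hc hsmall hr x (Set.mem_Iic.2 hx.2), ?_⟩
        have := hC x hx
        rw [Real.norm_eq_abs] at this
        exact (le_abs_self _).trans (this.trans (le_max_left _ _))
      have hm₁ : ∀ x ∈ Set.Icc s t, ρ x ∈ Set.Icc δ b := by
        intro x hx
        refine ⟨(hρm x hx).1, (hρm x hx).2.trans (le_max_right _ _)⟩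
      have := compare hlip hδ hδb hρcont hρD hm₁ (hcontIcc t r hr s)
        (fun x hx => hDIci t r hr x hx.2) hm₂ (by rw [hρ0]; exact hds) t ⟨hst, le_refl t⟩
      exact this
    -- d t ≤ ρ t via Gronwall
    have hle : d t ≤ ρ t := by
      apply le_of_forall_pos_le_add
      intro ε hε
      obtain ⟨L₁, hL₁, hLf₁⟩ := hlip (δ/2) (R₀+1) (by linarith) (by linarith)
      set E : ℝ := Real.exp (L₁ * (t - s)) with hE
      have hEpos : 0 < E := Real.exp_pos _
      set ε' : ℝ := min 1 (ε / E) with hε'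
      have hε'pos : 0 < ε' := lt_min one_pos (by positivity)
      obtain ⟨v, hvS, hvlt⟩ := exists_lt_of_csInf_lt (hne s)
        (show d s < d s + ε' by linarith)
      obtain ⟨r, hrG, hrv⟩ := hvS
      have hrv' : r s = v := hrv
      obtain ⟨r', hr'G, hr's, hr'b⟩ := hext s t hst r hrG
      have hds : d s ≤ r s := csInf_le (hbddS s) ⟨r, hrG, rfl⟩
      have hrs_lt : r s < d s + ε' := by rw [hrv']; exact hvlt
      have hub' : ∀ x ∈ Set.Icc s t, r' x ≤ R₀ + 1 := by
        intro x hx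
        refine (hr'b x hx).2.trans (max_le ?_ (by linarith))
        have := hdR₀ s
        have : ε' ≤ 1 := min_le_left _ _
        linarith
      -- clamped field
      set cl : ℝ → ℝ := fun y => max (δ/2) (min (R₀+1) y) with hcl
      set F : ℝ → ℝ → ℝ := fun x y => f x (cl y) with hF
      have hcl_mem : ∀ y, cl y ∈ Set.Icc (δ/2) (R₀+1) :=
        fun y => ⟨le_max_left _ _, max_le (by linarith) (min_le_left _ _)⟩
      have hcl_fix : ∀ y, δ ≤ y → y ≤ R₀ + 1 → cl y = y := by
        intro y h1 h2
        simp only [hcl]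
        rw [min_eq_right h2]
        exact max_eq_right (by linarith)
      have hLnn : ∀ x : ℝ, LipschitzWith L₁.toNNReal (F x) := by
        intro x
        apply LipschitzWith.of_dist_le_mul
        intro y₁ y₂
        rw [Real.dist_eq, Real.dist_eq, Real.coe_toNNReal _ hL₁.le]
        calc |F x y₁ - F x y₂| ≤ L₁ * |cl y₁ - cl y₂| :=
              hLf₁ x _ (hcl_mem y₁) _ (hcl_mem y₂)
        _ ≤ L₁ * |y₁ - y₂| := mul_le_mul_of_nonneg_left (clamp_lip _ _ _ _) hL₁.le
      have hgron := dist_le_of_trajectories_ODE (v := F) hLnn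
        (hcontIcc t r' hr'G s)
        (fun x hx => by
          have h := hDIci t r' hr'G x hx.2
          have hfx : F x (r' x) = f x (r' x) := by
            simp only [hF]
            rw [hcl_fix _ (hr'b x ⟨hx.1, hx.2.le⟩).1 (hub' x ⟨hx.1, hx.2.le⟩)]
          rwa [← hfx] at h)
        hρcont
        (fun x hx => by
          have h := hρD x hx
          have hfx : F x (ρ x) = f x (ρ x) := by
            simp only [hF]
            rw [hcl_fix _ (hρm x ⟨hx.1, hx.2.le⟩).1 (hρm x ⟨hx.1, hx.2.le⟩).2]
          rwa [← hfx] at h)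
        (show dist (r' s) (ρ s) ≤ ε' by
          rw [hr's, hρ0, Real.dist_eq, abs_of_nonneg (by linarith)]
          linarith)
        t ⟨hst, le_refl t⟩
      have hdt : d t ≤ r' t := csInf_le (hbddS t) ⟨r', hr'G, rfl⟩
      have hexp : (L₁.toNNReal : ℝ) = L₁ := Real.coe_toNNReal _ hL₁.le
      rw [hexp] at hgron
      have h1 : r' t ≤ ρ t + ε' * E := by
        have := (le_abs_self (r' t - ρ t)).trans (le_of_eq (Real.dist_eq _ _).symm)
        have h2 := this.trans hgron
        rw [hE]
        linarith
      have h2 : ε' * E ≤ ε := by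
        have h3 : ε' ≤ ε / E := min_le_right _ _
        calc ε' * E ≤ (ε / E) * E := mul_le_mul_of_nonneg_right h3 hEpos.le
        _ = ε := by field_simp
      linarith
    linarith
  refine ⟨δ, R₀, hδ, hR₀.le, d, fun x => ⟨hdδ x, hdR₀ x⟩, ?_, fun t => rfl⟩
  intro x₀
  obtain ⟨ρ, hρ0, hρb, hρDA, hρDs, hρc⟩ :=
    forward_exists hf hlip hδ hc hsmall hR₀ hlarge (x₀ - 1) (d (x₀ - 1)) (hdδ _)
  have heq : ∀ t ∈ Set.Ici (x₀ - 1), d t = ρ t :=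
    htrans (x₀ - 1) ρ hρ0 hρb hρDA hρDs hρc
  have hev : d =ᶠ[nhds x₀] ρ :=
    eventually_of_mem (Ioi_mem_nhds (show x₀ - 1 < x₀ by linarith)) (fun y hy => heq y (Set.mem_Ioi.1 hy).le)
  have hDA := hρDA x₀ (Set.mem_Ioi.2 (show x₀ - 1 < x₀ by linarith))
  have := hDA.congr_of_eventuallyEq hev
  rwa [← heq x₀ (show x₀ - 1 ≤ x₀ by linarith)] at this
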